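/- arXiv:2307.14297 — 2 statements merged into one kernel-verified Lean document; each statement's English description precedes it below -/
import Mathlib

section
/- (Determinant identity for the interconnected state matrix.) Let A ∈ ℝ^{n×n}, B_w ∈ ℝ^{n×n_w}, C_v ∈ ℝ^{n_v×n}, D_vw ∈ ℝ^{n_v×n_w} be a realization of M₁₁, and let A_Δ ∈ ℝ^{m×m}, B_Δ ∈ ℝ^{m×n_v}, C_Δ ∈ ℝ^{n_w×m}, D_Δ ∈ ℝ^{n_w×n_v} be a realization of Δ. Assume I_{n_v} − D_vwD_Δ is invertible (well-posedness), and define Ã := [[A,0],[0,A_Δ]] + [[0,B_w],[B_Δ,0]] · [[I_{n_v}, −D_vw],[−D_Δ, I_{n_w}]]⁻¹ · [[C_v, 0],[0, C_Δ]]. Then for every z ∈ ℂ that is not an eigenvalue of A and not an eigenvalue of A_Δ, with M₁₁(z) := C_v(zI − A)⁻¹B_w + D_vw and Δ(z) := C_Δ(zI − A_Δ)⁻¹B_Δ + D_Δ, one has det(zI − A) · det(zI − A_Δ) · det(I_{n_v} − M₁₁(z)Δ(z)) = det(I_{n_v} − D_vwD_Δ) · det(zI − Ã). In particular, for such z, det(I_{n_v}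 − M₁₁(z)Δ(z)) = 0 if and only if z is an eigenvalue of Ã. -/
open Matrix

noncomputable section

/-- Transfer function of a real state-space realization, evaluated at `z ∈ ℂ`. -/
def transferFn {n k l : ℕ} (A : Matrix (Fin n) (Fin n) ℝ) (B : Matrix (Fin n) (Fin l) ℝ)
    (C : Matrix (Fin k) (Fin n) ℝ) (D : Matrix (Fin k) (Fin l) ℝ) (z : ℂ) :
    Matrix (Fin k) (Fin l) ℂ :=
  C.map (algebraMap ℝ ℂ) *
    (z • (1 : Matrix (Fin n) (Fin n) ℂ) - A.map (algebraMap ℝ ℂ))⁻¹ *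
    B.map (algebraMap ℝ ℂ) + D.map (algebraMap ℝ ℂ)

/-- State matrix of the feedback interconnection of `M₁₁ = (A,B_w,C_v,D_vw)`
with the uncertainty `Δ = (A_Δ,B_Δ,C_Δ,D_Δ)`. -/
def interconnectA {n m nv nw : ℕ}
    (A : Matrix (Fin n) (Fin n) ℝ) (Bw : Matrix (Fin n) (Fin nw) ℝ)
    (Cv : Matrix (Fin nv) (Fin n) ℝ) (Dvw : Matrix (Fin nv) (Fin nw) ℝ)
    (AΔ : Matrix (Fin m) (Fin m) ℝ) (BΔ : Matrix (Fin m) (Fin nv) ℝ)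
    (CΔ : Matrix (Fin nw) (Fin m) ℝ) (DΔ : Matrix (Fin nw) (Fin nv) ℝ) :
    Matrix ((Fin n) ⊕ (Fin m)) ((Fin n) ⊕ (Fin m)) ℝ :=
  Matrix.fromBlocks A 0 0 AΔ +
    Matrix.fromBlocks 0 Bw BΔ 0 *
      (Matrix.fromBlocks (1 : Matrix (Fin nv) (Fin nv) ℝ) (-Dvw) (-DΔ)
        (1 : Matrix (Fin nw) (Fin nw) ℝ))⁻¹ *
      Matrix.fromBlocks Cv 0 0 CΔ

/-- Determinant identity for the interconnected state matrix
(Equation (43) of the paper). -/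
theorem interconnection_det_identity
    (n m nv nw : ℕ)
    (A : Matrix (Fin n) (Fin n) ℝ) (Bw : Matrix (Fin n) (Fin nw) ℝ)
    (Cv : Matrix (Fin nv) (Fin n) ℝ) (Dvw : Matrix (Fin nv) (Fin nw) ℝ)
    (AΔ : Matrix (Fin m) (Fin m) ℝ) (BΔ : Matrix (Fin m) (Fin nv) ℝ)
    (CΔ : Matrix (Fin nw) (Fin m) ℝ) (DΔ : Matrix (Fin nw) (Fin nv) ℝ)
    (hwp : IsUnit ((1 : Matrix (Fin nv) (Fin nv) ℝ) - Dvw * DΔ))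
    (Atil : Matrix ((Fin n) ⊕ (Fin m)) ((Fin n) ⊕ (Fin m)) ℝ)
    (hAtil : Atil = interconnectA A Bw Cv Dvw AΔ BΔ CΔ DΔ) :
    ∀ z : ℂ,
      z ∉ spectrum ℂ (A.map (algebraMap ℝ ℂ)) →
      z ∉ spectrum ℂ (AΔ.map (algebraMap ℝ ℂ)) →
      ((z • (1 : Matrix (Fin n) (Fin n) ℂ) - A.map (algebraMap ℝ ℂ)).det *
        (z • (1 : Matrix (Fin m) (Fin m) ℂ) - AΔ.map (algebraMap ℝ ℂ)).det *
        ((1 : Matrix (Fin nv) (Fin nv) ℂ) -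
          transferFn A Bw Cv Dvw z * transferFn AΔ BΔ CΔ DΔ z).det =
        ((((1 : Matrix (Fin nv) (Fin nv) ℝ) - Dvw * DΔ).det : ℂ)) *
          (z • (1 : Matrix ((Fin n) ⊕ (Fin m)) ((Fin n) ⊕ (Fin m)) ℂ) -
            Atil.map (algebraMap ℝ ℂ)).det) ∧
      (((1 : Matrix (Fin nv) (Fin nv) ℂ) -
          transferFn A Bw Cv Dvw z * transferFn AΔ BΔ CΔ DΔ z).det = 0 ↔
        z ∈ spectrum ℂ (Atil.map (algebraMap ℝ ℂ))) := by
  intro z hzA hzAΔ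
  set f : ℝ →+* ℂ := (algebraMap ℝ ℂ) with hf
  -- complex versions
  set Ac := A.map f
  set Bwc := Bw.map f with hBwc
  set Cvc := Cv.map f with hCvc
  set Dvwc := Dvw.map f with hDvwc
  set AΔc := AΔ.map f with hAΔc
  set BΔc := BΔ.map f with hBΔc
  set CΔc := CΔ.map f with hCΔc
  set DΔc := DΔ.map f with hDΔc
  set P : Matrix (Fin n) (Fin n) ℂ := z • 1 - Ac with hP
  set Q : Matrix (Fin m) (Fin m) ℂ := z • 1 - AΔc with hQ
  have hPu : IsUnit P := by
    have := spectrum.notMem_iff.mp hzA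
    rwa [Algebra.algebraMap_eq_smul_one] at this
  have hQu : IsUnit Q := by
    have := spectrum.notMem_iff.mp hzAΔ
    rwa [Algebra.algebraMap_eq_smul_one] at this
  haveI : Invertible P := hPu.invertible
  haveI : Invertible Q := hQu.invertible
  -- the real E and its complex image
  set Eℝ : Matrix ((Fin nv) ⊕ (Fin nw)) ((Fin nv) ⊕ (Fin nw)) ℝ :=
    Matrix.fromBlocks 1 (-Dvw) (-DΔ) 1 with hEℝ
  set Ec : Matrix ((Fin nv) ⊕ (Fin nw)) ((Fin nv) ⊕ (Fin nw)) ℂ :=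
    Matrix.fromBlocks 1 (-Dvwc) (-DΔc) 1 with hEc
  have hmapE : Eℝ.map f = Ec := by
    ext i j
    rcases i with i | i <;> rcases j with j | j <;>
      simp [hEℝ, hEc, Matrix.fromBlocks, Matrix.map_apply, Matrix.one_apply, apply_ite f,
        hDvwc, hDΔc]
  have hdetEℝ : Eℝ.det = ((1 : Matrix (Fin nv) (Fin nv) ℝ) - Dvw * DΔ).det := by
    rw [hEℝ, Matrix.det_fromBlocks_one₁₁]
    have : (1 : Matrix (Fin nw) (Fin nw) ℝ) - (-DΔ) * (-Dvw) = 1 + (-DΔ) * Dvw := by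
      rw [Matrix.neg_mul, Matrix.mul_neg, neg_neg, sub_eq_add_neg, Matrix.neg_mul]
    rw [this, Matrix.det_one_add_mul_comm, Matrix.mul_neg, ← sub_eq_add_neg]
  have hdetEℝu : IsUnit Eℝ.det := by
    rw [hdetEℝ]; exact (Matrix.isUnit_iff_isUnit_det _).mp hwp
  have hdetEc : Ec.det = (((1 : Matrix (Fin nv) (Fin nv) ℝ) - Dvw * DΔ).det : ℂ) := by
    have h := (f.map_det Eℝ).symm
    rw [RingHom.mapMatrix_apply] at h
    rw [← hmapE, h, hdetEℝ]
    simp [hf]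
  have hdetEcu : IsUnit Ec.det := by
    have h := (f.map_det Eℝ).symm
    rw [RingHom.mapMatrix_apply] at h
    rw [← hmapE, h]; exact hdetEℝu.map f
  haveI : Invertible Ec := Ec.invertibleOfIsUnitDet hdetEcu
  -- big blocks
  set Bhat : Matrix ((Fin n) ⊕ (Fin m)) ((Fin nv) ⊕ (Fin nw)) ℂ :=
    Matrix.fromBlocks 0 Bwc BΔc 0 with hBhat
  set Chat : Matrix ((Fin nv) ⊕ (Fin nw)) ((Fin n) ⊕ (Fin m)) ℂ :=
    Matrix.fromBlocks Cvc 0 0 CΔc with hChat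
  set Phat : Matrix ((Fin n) ⊕ (Fin m)) ((Fin n) ⊕ (Fin m)) ℂ :=
    Matrix.fromBlocks P 0 0 Q with hPhat
  haveI : Invertible Phat := by
    refine ⟨Matrix.fromBlocks (⅟P) 0 0 (⅟Q), ?_, ?_⟩ <;>
      simp [hPhat, Matrix.fromBlocks_multiply, ← Matrix.fromBlocks_one]
  have hinvPhat : ⅟Phat = Matrix.fromBlocks (⅟P) 0 0 (⅟Q) := by
    apply invOf_eq_right_inv
    simp [hPhat, Matrix.fromBlocks_multiply, ← Matrix.fromBlocks_one]
  -- the map of Eℝ⁻¹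
  have hinvE : (Eℝ⁻¹).map f = ⅟Ec := by
    rw [invOf_eq_nonsing_inv]
    symm
    apply Matrix.inv_eq_right_inv
    rw [← hmapE, ← Matrix.map_mul, Matrix.mul_nonsing_inv _ hdetEℝu]
    simp [Matrix.map_one f f.map_zero f.map_one]
  -- transfer functions via invOf
  set Mz := transferFn A Bw Cv Dvw z with hMz
  set Dz := transferFn AΔ BΔ CΔ DΔ z with hDz
  have hMz' : Mz = Cvc * ⅟P * Bwc + Dvwc := by
    rw [hMz, transferFn, invOf_eq_nonsing_inv]
  have hDz' : Dz = CΔc * ⅟Q * BΔc + DΔc := by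
    rw [hDz, transferFn, invOf_eq_nonsing_inv]
  -- Schur step 1 : Ec - Chat ⅟Phat Bhat
  have hS1 : Ec - Chat * ⅟Phat * Bhat = Matrix.fromBlocks 1 (-Mz) (-Dz) 1 := by
    rw [hinvPhat, hChat, hBhat, hEc, Matrix.fromBlocks_multiply, Matrix.fromBlocks_multiply,
      hMz', hDz']
    ext i j
    rcases i with i | i <;> rcases j with j | j <;>
      simp [Matrix.fromBlocks, Matrix.sub_apply, Matrix.add_apply, Matrix.neg_apply, sub_eq_add_neg]
  -- Schur step 2 : Phat - Bhat ⅟Ec Chat = z • 1 - Atil.map f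
  have hS2 : z • (1 : Matrix ((Fin n) ⊕ (Fin m)) ((Fin n) ⊕ (Fin m)) ℂ) - Atil.map f
      = Phat - Bhat * ⅟Ec * Chat := by
    rw [hAtil, interconnectA]
    have h1 : ((Matrix.fromBlocks A 0 0 AΔ +
        Matrix.fromBlocks 0 Bw BΔ 0 * Eℝ⁻¹ * Matrix.fromBlocks Cv 0 0 CΔ).map f)
        = Matrix.fromBlocks Ac 0 0 AΔc + Bhat * ⅟Ec * Chat := by
      rw [Matrix.map_add _ f.map_add, Matrix.map_mul, Matrix.map_mul, hinvE]
      congr 1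
      · rw [Matrix.fromBlocks_map]; congr 1 <;> simp [Matrix.map_zero]
      · congr 1
        · rw [hBhat, Matrix.fromBlocks_map]; congr 1 <;> simp [Matrix.map_zero]
        · rw [hChat, Matrix.fromBlocks_map]; congr 1 <;> simp [Matrix.map_zero]
    rw [h1, hPhat, hP, hQ]
    have h2 : z • (1 : Matrix ((Fin n) ⊕ (Fin m)) ((Fin n) ⊕ (Fin m)) ℂ)
        = Matrix.fromBlocks (z • 1) 0 0 (z • 1) := by
      rw [← Matrix.fromBlocks_one, Matrix.fromBlocks_smul]; simp
    rw [h2]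
    ext i j
    rcases i with i | i <;> rcases j with j | j <;>
      simp [Matrix.fromBlocks, Matrix.sub_apply, Matrix.add_apply, sub_sub]
  -- the two expansions of the big determinant
  have h11 := Matrix.det_fromBlocks₁₁ Phat Bhat Chat Ec
  have h22 := Matrix.det_fromBlocks₂₂ Phat Bhat Chat Ec
  have hkey : Phat.det * (Ec - Chat * ⅟Phat * Bhat).det
      = Ec.det * (Phat - Bhat * ⅟Ec * Chat).det := by
    rw [← h11, ← h22]
  have hdetPhat : Phat.det = P.det * Q.det := by
    rw [hPhat, Matrix.det_fromBlocks_zero₂₁]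
  have hdetS1 : (Ec - Chat * ⅟Phat * Bhat).det
      = ((1 : Matrix (Fin nv) (Fin nv) ℂ) - Mz * Dz).det := by
    rw [hS1, Matrix.det_fromBlocks_one₁₁]
    have e1 : (1 : Matrix (Fin nw) (Fin nw) ℂ) - (-Dz) * (-Mz) = 1 + (-Dz) * Mz := by
      rw [Matrix.neg_mul, Matrix.mul_neg, neg_neg, sub_eq_add_neg, Matrix.neg_mul]
    rw [e1, Matrix.det_one_add_mul_comm, Matrix.mul_neg, ← sub_eq_add_neg]
  -- main identity
  have main : P.det * Q.det * ((1 : Matrix (Fin nv) (Fin nv) ℂ) - Mz * Dz).det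
      = (((1 : Matrix (Fin nv) (Fin nv) ℝ) - Dvw * DΔ).det : ℂ) *
        (z • (1 : Matrix ((Fin n) ⊕ (Fin m)) ((Fin n) ⊕ (Fin m)) ℂ) - Atil.map f).det := by
    rw [← hdetPhat, ← hdetS1, hkey, hdetEc, hS2]
  refine ⟨main, ?_⟩
  have hPd : P.det ≠ 0 := ((Matrix.isUnit_iff_isUnit_det _).mp hPu).ne_zero
  have hQd : Q.det ≠ 0 := ((Matrix.isUnit_iff_isUnit_det _).mp hQu).ne_zero
  have hcd : (((1 : Matrix (Fin nv) (Fin nv) ℝ) - Dvw * DΔ).det : ℂ) ≠ 0 := by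
    rw [← hdetEc]; exact hdetEcu.ne_zero
  have hspec : (z • (1 : Matrix ((Fin n) ⊕ (Fin m)) ((Fin n) ⊕ (Fin m)) ℂ)
      - Atil.map f).det = 0 ↔ z ∈ spectrum ℂ (Atil.map f) := by
    rw [spectrum.mem_iff, Algebra.algebraMap_eq_smul_one,
      Matrix.isUnit_iff_isUnit_det, isUnit_iff_ne_zero, not_not]
  rw [← hspec]
  constructor
  · intro h
    have main' := main
    rw [h, mul_zero] at main'
    exact (mul_eq_zero.mp main'.symm).resolve_left hcd
  · intro h
    have main' := main
    rw [h, mul_zero] at main'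
    exact (mul_eq_zero.mp main').resolve_left (mul_ne_zero hPd hQd)
end
end

section
/- Let A ∈ ℝ^{n×n}, B_u ∈ ℝ^{n×m}, C_e ∈ ℝ^{p×n}, D_eu ∈ ℝ^{p×m}, with Q := C_eᵀC_e, S := C_eᵀD_eu, and R := D_euᵀD_eu positive definite. Let X be a symmetric positive definite matrix with H := R + B_uᵀXB_u invertible satisfying the DARE 0 = X − AᵀXA − Q + (AᵀXB_u + S)H⁻¹(AᵀXB_u + S)ᵀ, and suppose Â₁₁ := A − B_uK_x is nonsingular, where K_x := H⁻¹(AᵀXB_u + S)ᵀ. Then for every real γ_J, the matrix Q̃ := γ_J² Â₁₁⁻¹(X⁻¹ − Â₁₁X⁻¹Â₁₁ᵀ − B_uH⁻¹B_uᵀ)Â₁₁^{−⊤} is symmetric positive semidefinite. -/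
open Matrix

noncomputable section

/-- A nonnegative scalar multiple of a real positive semidefinite matrix is
positive semidefinite. -/
lemma posSemidef_smul_of_nonneg {k : ℕ} {M : Matrix (Fin k) (Fin k) ℝ}
    (hM : M.PosSemidef) {c : ℝ} (hc : 0 ≤ c) : (c • M).PosSemidef := by
  refine ⟨?_, fun x => ?_⟩
  · unfold Matrix.IsHermitian
    rw [conjTranspose_smul, hM.1]
    simp
  · have h := hM.2 x
    have e : (x.sum fun i xi => x.sum fun j xj => star xi * (c • M) i j * xj) =
        c * (x.sum fun i xi => x.sum fun j xj => star xi * M i j * xj) := by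
      simp only [Finsupp.mul_sum, Matrix.smul_apply, smul_eq_mul]
      refine Finsupp.sum_congr fun i _ => Finsupp.sum_congr fun j _ => ?_
      ring
    rw [e]
    exact mul_nonneg hc h

/-- The auxiliary state weighting `Q̃` appearing in the minimal-dimension
spectral factor construction is positive semidefinite. -/
theorem auxiliary_weight_psd
    (n m p : ℕ)
    (A : Matrix (Fin n) (Fin n) ℝ) (Bu : Matrix (Fin n) (Fin m) ℝ)
    (Ce : Matrix (Fin p) (Fin n) ℝ) (Deu : Matrix (Fin p) (Fin m) ℝ)
    (Q : Matrix (Fin n) (Fin n) ℝ) (S : Matrix (Fin n) (Fin m) ℝ)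
    (R : Matrix (Fin m) (Fin m) ℝ)
    (hQ : Q = Ceᵀ * Ce) (hS : S = Ceᵀ * Deu) (hR : R = Deuᵀ * Deu)
    (hRpd : R.PosDef)
    (X : Matrix (Fin n) (Fin n) ℝ) (hXpd : X.PosDef)
    (H : Matrix (Fin m) (Fin m) ℝ) (hH : H = R + Buᵀ * X * Bu) (hHinv : IsUnit H)
    (hDARE : 0 = X - Aᵀ * X * A - Q +
      (Aᵀ * X * Bu + S) * H⁻¹ * (Aᵀ * X * Bu + S)ᵀ)
    (Kx : Matrix (Fin m) (Fin n) ℝ) (hKx : Kx = H⁻¹ * (Aᵀ * X * Bu + S)ᵀ)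
    (A11 : Matrix (Fin n) (Fin n) ℝ) (hA11 : A11 = A - Bu * Kx)
    (hA11inv : IsUnit A11) :
    ∀ γJ : ℝ,
      (γJ ^ 2 •
        (A11⁻¹ * (X⁻¹ - A11 * X⁻¹ * A11ᵀ - Bu * H⁻¹ * Buᵀ) * (A11⁻¹)ᵀ)).PosSemidef := by
  intro γJ
  -- basic symmetry facts
  have hXs : Xᵀ = X := by
    have := hXpd.isHermitian
    rwa [Matrix.IsHermitian, conjTranspose_eq_transpose_of_trivial] at this
  have hHs : Hᵀ = H := by
    rw [hH, transpose_add, transpose_mul, transpose_mul, transpose_transpose, hXs, hR,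
      transpose_mul, transpose_transpose, ← Matrix.mul_assoc]
  -- invertibility facts
  have hXdet : IsUnit X.det := (Matrix.isUnit_iff_isUnit_det X).mp hXpd.isUnit
  have hHdet : IsUnit H.det := (Matrix.isUnit_iff_isUnit_det H).mp hHinv
  have hXi1 : X⁻¹ * X = 1 := Matrix.nonsing_inv_mul X hXdet
  have hXi2 : X * X⁻¹ = 1 := Matrix.mul_nonsing_inv X hXdet
  have hHi1 : H⁻¹ * H = 1 := Matrix.nonsing_inv_mul H hHdet
  have hHi2 : H * H⁻¹ = 1 := Matrix.mul_nonsing_inv H hHdet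
  have hXis : (X⁻¹)ᵀ = X⁻¹ := by rw [transpose_nonsing_inv, hXs]
  have hHis : (H⁻¹)ᵀ = H⁻¹ := by rw [transpose_nonsing_inv, hHs]
  -- abbreviations
  set W : Matrix (Fin n) (Fin m) ℝ := Aᵀ * X * Bu + S with hW
  have hKxT : Kxᵀ = W * H⁻¹ := by
    rw [hKx, transpose_mul, transpose_transpose, hHis]
  have hWT : Wᵀ = Buᵀ * X * A + Sᵀ := by
    rw [hW, transpose_add, transpose_mul, transpose_mul, transpose_transpose, hXs,
      ← Matrix.mul_assoc]
  -- the DARE rewritten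
  have hQ' : Aᵀ * X * A + Q = X + W * H⁻¹ * Wᵀ := by
    rw [← sub_eq_zero,
      show Aᵀ * X * A + Q - (X + W * H⁻¹ * Wᵀ) =
        -(X - Aᵀ * X * A - Q + W * H⁻¹ * Wᵀ) from by abel,
      ← hDARE, neg_zero]
  -- closed-loop transpose
  have hA11T : A11ᵀ = Aᵀ - W * H⁻¹ * Buᵀ := by
    rw [hA11, transpose_sub, transpose_mul, hKxT]
  set X1 : Matrix (Fin n) (Fin n) ℝ := X⁻¹ * A11ᵀ with hX1
  set U2 : Matrix (Fin m) (Fin n) ℝ := H⁻¹ * Buᵀ - Kx * X1 with hU2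
  set Z : Matrix (Fin n) (Fin n) ℝ := A * X1 + Bu * U2 with hZ
  set F : Matrix (Fin p) (Fin n) ℝ := Ce * X1 + Deu * U2 with hF
  clear_value X1 U2 Z F
  -- cancellation helpers
  have cX : ∀ (k : ℕ) (t : Matrix (Fin n) (Fin k) ℝ), X * (X⁻¹ * t) = t := by
    intro k t; rw [← Matrix.mul_assoc, hXi2, Matrix.one_mul]
  have cH : ∀ (k : ℕ) (t : Matrix (Fin m) (Fin k) ℝ), H * (H⁻¹ * t) = t := by
    intro k t; rw [← Matrix.mul_assoc, hHi2, Matrix.one_mul]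
  -- Φ-relations
  have h1 : (Aᵀ * X * A + Q) * X1 + W * U2 = Aᵀ := by
    rw [hQ']
    simp only [hU2, hKx, hX1, Matrix.mul_sub, Matrix.sub_mul, Matrix.add_mul,
      Matrix.mul_add, Matrix.mul_assoc, cX, cH]
    rw [hA11T]
    simp only [Matrix.mul_assoc]
    abel
  have h2 : Wᵀ * X1 + H * U2 = Buᵀ := by
    simp only [hU2, hKx, hX1, Matrix.mul_sub, Matrix.mul_assoc, cH]
    abel
  -- F-expansion
  have hSTr : Sᵀ = Deuᵀ * Ce := by rw [hS, transpose_mul, transpose_transpose]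
  have hFF : Fᵀ * F = X1ᵀ * (Q * X1) + X1ᵀ * (S * U2) + U2ᵀ * (Sᵀ * X1) + U2ᵀ * (R * U2) := by
    rw [hF]
    simp only [transpose_add, transpose_mul, transpose_transpose, hQ, hS, hR, hSTr,
      Matrix.add_mul, Matrix.mul_add, Matrix.mul_assoc]
    abel
  -- main quadratic identity
  have h3 : Zᵀ * X * Z + Fᵀ * F = Zᵀ := by
    have hZT : Zᵀ = X1ᵀ * Aᵀ + U2ᵀ * Buᵀ := by
      rw [hZ, transpose_add, transpose_mul, transpose_mul]
    rw [hFF, hZT, hZ]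
    have hgroup :
        (X1ᵀ * Aᵀ + U2ᵀ * Buᵀ) * X * (A * X1 + Bu * U2) +
          (X1ᵀ * (Q * X1) + X1ᵀ * (S * U2) + U2ᵀ * (Sᵀ * X1) + U2ᵀ * (R * U2)) =
        X1ᵀ * ((Aᵀ * X * A + Q) * X1 + W * U2) + U2ᵀ * (Wᵀ * X1 + H * U2) := by
      rw [hW, hWT, hH]
      simp only [Matrix.add_mul, Matrix.mul_add, Matrix.mul_assoc]
      abel
    rw [hgroup, h1, h2]
  -- Z in closed-loop form and symmetry
  have h4 : Z = A11 * X⁻¹ * A11ᵀ + Bu * (H⁻¹ * Buᵀ) := by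
    have h4a : Z = A11 * X1 + Bu * (H⁻¹ * Buᵀ) := by
      rw [hZ, hU2, Matrix.mul_sub]
      conv_rhs => rw [hA11]
      rw [Matrix.sub_mul]
      simp only [Matrix.mul_assoc]
      abel
    rw [h4a, hX1, ← Matrix.mul_assoc]
  have h5 : Zᵀ = Z := by
    rw [h4, transpose_add, transpose_mul, transpose_mul, transpose_mul, transpose_mul,
      transpose_transpose, transpose_transpose, hXis, hHis]
    simp only [Matrix.mul_assoc]
  -- the key factorization of the middle matrix
  have key : X⁻¹ - A11 * X⁻¹ * A11ᵀ - Bu * H⁻¹ * Buᵀ =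
      (X⁻¹ - Z)ᵀ * X * (X⁻¹ - Z) + Fᵀ * F := by
    have expand : (X⁻¹ - Z)ᵀ * X * (X⁻¹ - Z) =
        X⁻¹ * X * X⁻¹ - X⁻¹ * X * Z - Zᵀ * X * X⁻¹ + Zᵀ * X * Z := by
      rw [transpose_sub, hXis]
      simp only [Matrix.sub_mul, Matrix.mul_sub]
      abel
    rw [expand]
    simp only [hXi1, Matrix.one_mul]
    rw [Matrix.mul_assoc Zᵀ X X⁻¹, hXi2, Matrix.mul_one]
    have hre : X⁻¹ - Z - Zᵀ + Zᵀ * X * Z + Fᵀ * F =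
        X⁻¹ - Z - Zᵀ + (Zᵀ * X * Z + Fᵀ * F) := by abel
    rw [hre, h3, h5]
    rw [h4, Matrix.mul_assoc Bu H⁻¹ Buᵀ]
    abel
  -- positive semidefiniteness of the middle matrix
  have hmid : (X⁻¹ - A11 * X⁻¹ * A11ᵀ - Bu * H⁻¹ * Buᵀ).PosSemidef := by
    rw [key]
    have hpsd1 : ((X⁻¹ - Z)ᵀ * X * (X⁻¹ - Z)).PosSemidef := by
      have := hXpd.posSemidef.conjTranspose_mul_mul_same (X⁻¹ - Z)
      rwa [conjTranspose_eq_transpose_of_trivial] at this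
    have hpsd2 : (Fᵀ * F).PosSemidef := by
      have := Matrix.posSemidef_conjTranspose_mul_self F
      rwa [conjTranspose_eq_transpose_of_trivial] at this
    exact hpsd1.add hpsd2
  have hcong : (A11⁻¹ * (X⁻¹ - A11 * X⁻¹ * A11ᵀ - Bu * H⁻¹ * Buᵀ) * (A11⁻¹)ᵀ).PosSemidef := by
    have := hmid.mul_mul_conjTranspose_same A11⁻¹
    rwa [conjTranspose_eq_transpose_of_trivial] at this
  exact posSemidef_smul_of_nonneg hcong (sq_nonneg γJ)
end
end
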